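/- Let γ be a complex number with |γ| = 1 that is not a root of unity, and for θ ∈ ℝ define the 2×2 matrix M_γ(θ) = [[cos θ, −γ̄ sin θ],[γ sin θ, cos θ]] (which lies in SU(2)). Then the subgroup of 2×2 complex matrices generated by the set {M_γ(θ) : θ ∈ ℝ} ∪ {M_γ(θ)ᵀ : θ ∈ ℝ} is dense in SU(2): its topological closure contains every 2×2 unitary matrix of determinant 1. -/

import Mathlib

open Matrix

/-- The matrix `M_γ(θ) = [[cos θ, −γ̄ sin θ],[γ sin θ, cos θ]]`. -/
noncomputable def Mgam (γ : ℂ) (θ : ℝ) : Matrix (Fin 2) (Fin 2) ℂ :=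
  !![(Real.cos θ : ℂ), -(starRingEnd ℂ) γ * ↑(Real.sin θ);
     γ * ↑(Real.sin θ), (Real.cos θ : ℂ)]

/-- The diagonal matrix `diag(w, conj w)`. -/
noncomputable def dgAux (w : ℂ) : Matrix (Fin 2) (Fin 2) ℂ :=
  !![w, 0; 0, (starRingEnd ℂ) w]

lemma dgAux_mul (w w' : ℂ) : dgAux w * dgAux w' = dgAux (w * w') := by
  simp [dgAux, Matrix.mul_fin_two]

lemma dgAux_pow (w : ℂ) (n : ℕ) : dgAux w ^ n = dgAux (w ^ n) := by
  induction n with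
  | zero => simp [dgAux, Matrix.one_fin_two]
  | succ k ih => rw [pow_succ, ih, dgAux_mul, ← pow_succ]

lemma dgAux_continuous : Continuous dgAux := by
  apply continuous_matrix
  intro i j
  fin_cases i <;> fin_cases j <;>
    simp [dgAux] <;>
    first | exact continuous_id | exact continuous_const | exact Complex.continuous_conj

lemma Mgam_transpose (γ : ℂ) (θ : ℝ) :
    (Mgam γ θ)ᵀ = !![(Real.cos θ : ℂ), γ * ↑(Real.sin θ);
      -(starRingEnd ℂ) γ * ↑(Real.sin θ), (Real.cos θ : ℂ)] := by
  ext i j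
  fin_cases i <;> fin_cases j <;> simp [Mgam, Matrix.transpose_apply]

lemma dgAux_D (γ : ℂ) :
    Mgam γ (Real.pi / 2) * (Mgam γ (Real.pi / 2))ᵀ = dgAux (((starRingEnd ℂ) γ) ^ 2) := by
  rw [Mgam_transpose]
  simp only [Mgam, dgAux, Matrix.mul_fin_two, Real.cos_pi_div_two, Real.sin_pi_div_two]
  norm_num
  simp [sq]

lemma dgAux_Dinv (γ : ℂ) :
    (Mgam γ (Real.pi / 2))ᵀ * Mgam γ (Real.pi / 2) = dgAux (γ ^ 2) := by
  rw [Mgam_transpose]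
  simp only [Mgam, dgAux, Matrix.mul_fin_two, Real.cos_pi_div_two, Real.sin_pi_div_two]
  norm_num
  simp [sq]

lemma dense_zpow_aux (γ : ℂ) (hγ : ‖γ‖ = 1)
    (hroot : ¬ ∃ n : ℕ, 0 < n ∧ γ ^ n = 1) {z : ℂ} (hz : ‖z‖ = 1) :
    z ∈ closure {w : ℂ | ∃ m : ℤ, w = γ ^ m} := by
  set t := Complex.arg γ with ht
  have hγe : γ = Complex.exp (t * Complex.I) := by
    conv_lhs => rw [← Complex.norm_mul_exp_arg_mul_I γ]
    rw [hγ]; simp [ht]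
  have hpow : ∀ m : ℤ, Complex.exp (((m : ℝ) * t : ℝ) * Complex.I) = γ ^ m := by
    intro m
    rw [hγe, ← Complex.exp_int_mul]
    congr 1; push_cast; ring
  rcases AddSubgroup.dense_or_cyclic (AddSubgroup.closure {t, 2 * Real.pi}) with hd | ⟨a, ha⟩
  · have hsub : (fun x : ℝ => Complex.exp ((x : ℂ) * Complex.I)) ''
        ((AddSubgroup.closure {t, 2 * Real.pi} : AddSubgroup ℝ) : Set ℝ) ⊆
        {w : ℂ | ∃ m : ℤ, w = γ ^ m} := by
      rintro _ ⟨x, hx, rfl⟩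
      rw [SetLike.mem_coe, AddSubgroup.mem_closure_pair] at hx
      obtain ⟨m, n, rfl⟩ := hx
      refine ⟨m, ?_⟩
      have he : ((m • t + n • (2 * Real.pi) : ℝ) : ℂ) * Complex.I
          = ((m : ℝ) * t : ℝ) * Complex.I + (n : ℂ) * (2 * Real.pi * Complex.I) := by
        push_cast [zsmul_eq_mul]; ring
      show Complex.exp _ = _
      rw [he, Complex.exp_add, Complex.exp_int_mul_two_pi_mul_I, mul_one, hpow]
    have hc : Continuous fun x : ℝ => Complex.exp ((x : ℂ) * Complex.I) :=
      Complex.continuous_exp.comp (Complex.continuous_ofReal.mul continuous_const)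
    have hzs : z = Complex.exp ((Complex.arg z : ℂ) * Complex.I) := by
      conv_lhs => rw [← Complex.norm_mul_exp_arg_mul_I z]
      rw [hz]; simp
    have hmem : z ∈ (fun x : ℝ => Complex.exp ((x : ℂ) * Complex.I)) ''
        (closure ((AddSubgroup.closure {t, 2 * Real.pi} : AddSubgroup ℝ) : Set ℝ)) :=
      ⟨Complex.arg z, by rw [hd.closure_eq]; trivial, hzs.symm⟩
    exact closure_mono hsub (image_closure_subset_closure_image hc hmem)
  · exfalso
    have htm : t ∈ AddSubgroup.closure ({t, 2 * Real.pi} : Set ℝ) :=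
      AddSubgroup.subset_closure (by simp)
    have hpm : (2 * Real.pi) ∈ AddSubgroup.closure ({t, 2 * Real.pi} : Set ℝ) :=
      AddSubgroup.subset_closure (by simp)
    rw [ha, AddSubgroup.mem_closure_singleton] at htm hpm
    obtain ⟨m, hm⟩ := htm
    obtain ⟨n, hn⟩ := hpm
    have hn0 : n ≠ 0 := by
      rintro rfl
      simp at hn
    have h1 : γ ^ (n : ℤ) = 1 := by
      rw [← hpow n]
      have e : (n : ℝ) * t = (m : ℝ) * (2 * Real.pi) := by
        rw [← hm, ← hn]; push_cast [zsmul_eq_mul]; ring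
      rw [e]
      have e2 : (((m : ℝ) * (2 * Real.pi) : ℝ) : ℂ) * Complex.I
          = (m : ℂ) * (2 * Real.pi * Complex.I) := by push_cast; ring
      rw [e2, Complex.exp_int_mul_two_pi_mul_I]
    apply hroot
    refine ⟨n.natAbs, Int.natAbs_pos.mpr hn0, ?_⟩
    rcases Int.natAbs_eq n with h | h
    · rw [← zpow_natCast, ← h, h1]
    · rw [← zpow_natCast]
      have : ((n.natAbs : ℤ)) = -n := by omega
      rw [this, _root_.zpow_neg, h1, inv_one]

theorem stmt11 (γ : ℂ) (hγ : ‖γ‖ = 1)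
    (hroot : ¬ ∃ n : ℕ, 0 < n ∧ γ ^ n = 1)
    (U : Matrix (Fin 2) (Fin 2) ℂ)
    (hU : U ∈ Matrix.unitaryGroup (Fin 2) ℂ) (hdet : U.det = 1) :
    U ∈ closure ((Submonoid.closure
      ({M | ∃ θ : ℝ, M = Mgam γ θ} ∪ {M | ∃ θ : ℝ, M = (Mgam γ θ)ᵀ}) :
        Submonoid (Matrix (Fin 2) (Fin 2) ℂ)) : Set (Matrix (Fin 2) (Fin 2) ℂ)) := by
  set S : Submonoid (Matrix (Fin 2) (Fin 2) ℂ) := Submonoid.closure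
      ({M | ∃ θ : ℝ, M = Mgam γ θ} ∪ {M | ∃ θ : ℝ, M = (Mgam γ θ)ᵀ}) with hSdef
  have hconj : (starRingEnd ℂ) γ * γ = 1 := by
    rw [mul_comm, Complex.mul_conj, ← Complex.sq_norm, hγ]; norm_num
  have hMmem : ∀ θ : ℝ, Mgam γ θ ∈ S := fun θ => Submonoid.subset_closure (Or.inl ⟨θ, rfl⟩)
  have hMTmem : ∀ θ : ℝ, (Mgam γ θ)ᵀ ∈ S := fun θ => Submonoid.subset_closure (Or.inr ⟨θ, rfl⟩)
  have hDmem : dgAux (((starRingEnd ℂ) γ) ^ 2) ∈ S := by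
    rw [← dgAux_D]; exact mul_mem (hMmem _) (hMTmem _)
  have hDinvmem : dgAux (γ ^ 2) ∈ S := by
    rw [← dgAux_Dinv]; exact mul_mem (hMTmem _) (hMmem _)
  have hγinv : ((starRingEnd ℂ) γ) ^ 2 = (γ ^ 2)⁻¹ := by
    refine eq_inv_of_mul_eq_one_left ?_
    rw [← mul_pow, hconj, one_pow]
  have hzpowmem : ∀ m : ℤ, dgAux ((γ ^ 2) ^ m) ∈ S := by
    intro m
    rcases m with k | k
    · rw [Int.ofNat_eq_coe, zpow_natCast, ← dgAux_pow]
      exact pow_mem hDinvmem k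
    · have he : (γ ^ 2) ^ (Int.negSucc k) = (((starRingEnd ℂ) γ) ^ 2) ^ (k + 1) := by
        rw [zpow_negSucc, hγinv, inv_pow]
      rw [he, ← dgAux_pow]
      exact pow_mem hDmem (k + 1)
  have htorus : ∀ z : ℂ, ‖z‖ = 1 → dgAux z ∈ closure (S : Set _) := by
    intro z hz
    have hγ2 : ‖γ ^ 2‖ = 1 := by rw [norm_pow, hγ, one_pow]
    have hroot2 : ¬ ∃ n : ℕ, 0 < n ∧ (γ ^ 2) ^ n = 1 := by
      rintro ⟨n, hn, h⟩
      rw [← pow_mul] at h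
      exact hroot ⟨2 * n, by omega, h⟩
    have hzc := dense_zpow_aux (γ ^ 2) hγ2 hroot2 hz
    have himg : dgAux '' {w : ℂ | ∃ m : ℤ, w = (γ ^ 2) ^ m} ⊆ (S : Set _) := by
      rintro _ ⟨w, ⟨m, rfl⟩, rfl⟩; exact hzpowmem m
    have hmem : dgAux z ∈ dgAux '' closure {w : ℂ | ∃ m : ℤ, w = (γ ^ 2) ^ m} := ⟨z, hzc, rfl⟩
    exact closure_mono himg (image_closure_subset_closure_image dgAux_continuous hmem)
  -- SU(2) structure of U
  have hU2 : U * star U = 1 := Matrix.mem_unitaryGroup_iff.mp hU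
  rw [← Matrix.ext_iff] at hU2
  have e1 : U 0 0 * (starRingEnd ℂ) (U 0 0) + U 0 1 * (starRingEnd ℂ) (U 0 1) = 1 := by
    simpa [Matrix.mul_apply, Fin.sum_univ_two, Matrix.star_apply, RCLike.star_def,
      Matrix.one_apply] using hU2 0 0
  have e2 : U 0 0 * (starRingEnd ℂ) (U 1 0) + U 0 1 * (starRingEnd ℂ) (U 1 1) = 0 := by
    simpa [Matrix.mul_apply, Fin.sum_univ_two, Matrix.star_apply, RCLike.star_def,
      Matrix.one_apply] using hU2 0 1
  have e4 : U 1 0 * (starRingEnd ℂ) (U 1 0) + U 1 1 * (starRingEnd ℂ) (U 1 1) = 1 := by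
    simpa [Matrix.mul_apply, Fin.sum_univ_two, Matrix.star_apply, RCLike.star_def,
      Matrix.one_apply] using hU2 1 1
  have ed : U 0 0 * U 1 1 - U 0 1 * U 1 0 = 1 := by
    rw [← Matrix.det_fin_two]; exact hdet
  have had : U 1 1 = (starRingEnd ℂ) (U 0 0) := by
    have h1 : U 0 0 = (starRingEnd ℂ) (U 1 1) := by
      linear_combination ((starRingEnd ℂ) (U 1 1)) * ed - (U 0 0) * e4 + (U 1 0) * e2
    calc U 1 1 = (starRingEnd ℂ) ((starRingEnd ℂ) (U 1 1)) := by rw [Complex.conj_conj]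
    _ = (starRingEnd ℂ) (U 0 0) := by rw [← h1]
  have hbc : U 1 0 = -(starRingEnd ℂ) (U 0 1) := by
    have h1 : U 0 1 = -(starRingEnd ℂ) (U 1 0) := by
      linear_combination (-((starRingEnd ℂ) (U 1 0))) * ed - (U 0 1) * e4 + (U 1 1) * e2
    calc U 1 0 = (starRingEnd ℂ) ((starRingEnd ℂ) (U 1 0)) := by rw [Complex.conj_conj]
    _ = -(starRingEnd ℂ) (U 0 1) := by rw [h1]; simp
  have habs : ‖U 0 0‖ ^ 2 + ‖U 0 1‖ ^ 2 = 1 := by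
    have h := e1
    rw [Complex.mul_conj, Complex.mul_conj] at h
    rw [Complex.sq_norm, Complex.sq_norm]
    exact_mod_cast h
  -- the angle
  set θ : ℝ := Real.arccos (‖U 0 0‖) with hθdef
  have hcos : Real.cos θ = ‖U 0 0‖ := by
    apply Real.cos_arccos
    · linarith [norm_nonneg (U 0 0)]
    · nlinarith [norm_nonneg (U 0 1), norm_nonneg (U 0 0)]
  have hsin : Real.sin θ = ‖U 0 1‖ := by
    rw [hθdef, Real.sin_arccos]
    have : 1 - ‖U 0 0‖ ^ 2 = ‖U 0 1‖ ^ 2 := by linarith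
    rw [this, Real.sqrt_sq (norm_nonneg _)]
  -- phases
  set p : ℂ := if U 0 0 = 0 then 1 else U 0 0 / ‖U 0 0‖ with hpdef
  set q : ℂ := if U 0 1 = 0 then 1 else -(γ * U 0 1) / ‖U 0 1‖ with hqdef
  have hpabs : ‖p‖ = 1 := by
    rw [hpdef]; split_ifs with h
    · simp
    · rw [norm_div, Complex.norm_real, norm_norm,
        div_self (norm_ne_zero_iff.mpr h)]
  have hqabs : ‖q‖ = 1 := by
    rw [hqdef]; split_ifs with h
    · simp
    · rw [norm_div, norm_neg, norm_mul, hγ, one_mul, Complex.norm_real,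
        norm_norm, div_self (norm_ne_zero_iff.mpr h)]
  set z : ℂ := Complex.exp ((((Complex.arg p + Complex.arg q) / 2 : ℝ) : ℂ) * Complex.I)
    with hzdef
  set w : ℂ := Complex.exp ((((Complex.arg p - Complex.arg q) / 2 : ℝ) : ℂ) * Complex.I)
    with hwdef
  have hzabs : ‖z‖ = 1 := Complex.norm_exp_ofReal_mul_I _
  have hwabs : ‖w‖ = 1 := Complex.norm_exp_ofReal_mul_I _
  have hconjexp : ∀ s : ℝ, (starRingEnd ℂ) (Complex.exp ((s : ℂ) * Complex.I))
      = Complex.exp (((-s : ℝ) : ℂ) * Complex.I) := by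
    intro s
    rw [← Complex.exp_conj]
    congr 1
    rw [_root_.map_mul, Complex.conj_ofReal, Complex.conj_I]
    push_cast; ring
  have hzw : z * w = p := by
    rw [hzdef, hwdef, ← Complex.exp_add]
    have he : (((Complex.arg p + Complex.arg q) / 2 : ℝ) : ℂ) * Complex.I
        + (((Complex.arg p - Complex.arg q) / 2 : ℝ) : ℂ) * Complex.I
        = ((Complex.arg p : ℝ) : ℂ) * Complex.I := by push_cast; ring
    rw [he]
    conv_rhs => rw [← Complex.norm_mul_exp_arg_mul_I p]
    rw [hpabs]; simp
  have hzwb : z * (starRingEnd ℂ) w = q := by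
    rw [hzdef, hwdef, hconjexp, ← Complex.exp_add]
    have he : (((Complex.arg p + Complex.arg q) / 2 : ℝ) : ℂ) * Complex.I
        + (((-((Complex.arg p - Complex.arg q) / 2) : ℝ) : ℂ)) * Complex.I
        = ((Complex.arg q : ℝ) : ℂ) * Complex.I := by push_cast; ring
    rw [he]
    conv_rhs => rw [← Complex.norm_mul_exp_arg_mul_I q]
    rw [hqabs]; simp
  -- the four scalar identities
  have g00 : z * w * (‖U 0 0‖ : ℂ) = U 0 0 := by
    rw [hzw, hpdef]; split_ifs with h
    · simp [h]
    · have hne : (‖U 0 0‖ : ℂ) ≠ 0 :=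
        Complex.ofReal_ne_zero.mpr (norm_ne_zero_iff.mpr h)
      field_simp
  have g01 : z * (starRingEnd ℂ) w * (-((starRingEnd ℂ) γ) * (‖U 0 1‖ : ℂ))
      = U 0 1 := by
    rw [hzwb, hqdef]; split_ifs with h
    · simp [h]
    · have hne : (‖U 0 1‖ : ℂ) ≠ 0 :=
        Complex.ofReal_ne_zero.mpr (norm_ne_zero_iff.mpr h)
      field_simp
      linear_combination hconj
  have g11 : (starRingEnd ℂ) z * (starRingEnd ℂ) w * (‖U 0 0‖ : ℂ)
      = (starRingEnd ℂ) (U 0 0) := by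
    have h := congrArg (starRingEnd ℂ) g00
    simpa [_root_.map_mul, Complex.conj_ofReal] using h
  have g10 : (starRingEnd ℂ) z * w * (γ * (‖U 0 1‖ : ℂ))
      = -(starRingEnd ℂ) (U 0 1) := by
    have h := congrArg (starRingEnd ℂ) g01
    simp only [_root_.map_mul, map_neg, Complex.conj_ofReal, Complex.conj_conj] at h
    linear_combination -h
  -- the key decomposition
  have hkey : U = dgAux z * Mgam γ θ * dgAux w := by
    have hR : dgAux z * Mgam γ θ * dgAux w =
        !![z * w * (Real.cos θ : ℂ),
           z * (starRingEnd ℂ) w * (-((starRingEnd ℂ) γ) * (Real.sin θ : ℂ));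
           (starRingEnd ℂ) z * w * (γ * (Real.sin θ : ℂ)),
           (starRingEnd ℂ) z * (starRingEnd ℂ) w * (Real.cos θ : ℂ)] := by
      ext i j
      fin_cases i <;> fin_cases j <;>
        simp [dgAux, Mgam, Matrix.mul_fin_two] <;> ring
    rw [hR]
    ext i j
    fin_cases i <;> fin_cases j
    · show U 0 0 = _
      simp only [Matrix.cons_val', Matrix.cons_val_zero, Matrix.empty_val',
        Matrix.cons_val_fin_one, Matrix.of_apply]
      rw [hcos]; exact g00.symm
    · show U 0 1 = _
      simp only [Matrix.cons_val', Matrix.cons_val_zero, Matrix.cons_val_one,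
        Matrix.head_cons, Matrix.empty_val', Matrix.cons_val_fin_one, Matrix.of_apply]
      rw [hsin]; exact g01.symm
    · show U 1 0 = _
      simp only [Matrix.cons_val', Matrix.cons_val_zero, Matrix.cons_val_one,
        Matrix.head_cons, Matrix.head_fin_const, Matrix.empty_val',
        Matrix.cons_val_fin_one, Matrix.of_apply]
      rw [hsin, hbc]; exact g10.symm
    · show U 1 1 = _
      simp only [Matrix.cons_val', Matrix.cons_val_one, Matrix.head_cons,
        Matrix.head_fin_const, Matrix.empty_val', Matrix.cons_val_fin_one, Matrix.of_apply]
      rw [hcos, had]; exact g11.symm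
  -- assembly
  have hz' : dgAux z ∈ S.topologicalClosure := htorus z hzabs
  have hw' : dgAux w ∈ S.topologicalClosure := htorus w hwabs
  have hM' : Mgam γ θ ∈ S.topologicalClosure := S.le_topologicalClosure (hMmem θ)
  have : U ∈ S.topologicalClosure := by
    rw [hkey]
    exact mul_mem (mul_mem hz' hM') hw'
  exact this
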